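/- Under the stated assumptions, the relaxation step is an L¹-contraction between density profiles: if ρ, σ : ℝ → ∏_{j=1}^M [0,R_j] are measurable functions such that ρ_j − σ_j is integrable for every j, then ∑_{j=1}^M ∫_ℝ |T_j(ρ(x)) − T_j(σ(x))| dx ≤ ∑_{j=1}^M ∫_ℝ |ρ_j(x) − σ_j(x)| dx. (This is the L¹ stability estimate (FL2) in the proof of Lemma 3.2 for the source splitting step.) -/

import Mathlib

open Set MeasureTheory

private lemma sliceU_diff {S : ℝ → ℝ → ℝ} (h : ContDiff ℝ 1 (Function.uncurry S)) (w : ℝ) :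
    Differentiable ℝ (fun u => S u w) :=
  (h.differentiable one_ne_zero).comp (differentiable_id.prodMk (differentiable_const w))

private lemma sliceW_diff {S : ℝ → ℝ → ℝ} (h : ContDiff ℝ 1 (Function.uncurry S)) (u : ℝ) :
    Differentiable ℝ (fun w => S u w) :=
  (h.differentiable one_ne_zero).comp ((differentiable_const u).prodMk differentiable_id)

private lemma monoS {R1 R2 𝒮 : ℝ} {S : ℝ → ℝ → ℝ}
    (hC : ContDiff ℝ 1 (Function.uncurry S))
    (hd : ∀ u ∈ Icc (0:ℝ) R1, ∀ w ∈ Icc (0:ℝ) R2, deriv (fun u' => S u' w) u ∈ Icc (0:ℝ) 𝒮)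
    {w : ℝ} (hw : w ∈ Icc (0:ℝ) R2) :
    MonotoneOn (fun u => S u w) (Icc (0:ℝ) R1) := by
  apply monotoneOn_of_deriv_nonneg (convex_Icc _ _)
  · exact (sliceU_diff hC w).continuous.continuousOn
  · exact (sliceU_diff hC w).differentiableOn
  · intro u hu
    exact (hd u (interior_subset hu) w hw).1

private lemma antiS {R1 R2 𝒮 : ℝ} {S : ℝ → ℝ → ℝ}
    (hC : ContDiff ℝ 1 (Function.uncurry S))
    (hd : ∀ u ∈ Icc (0:ℝ) R1, ∀ w ∈ Icc (0:ℝ) R2, deriv (fun w' => S u w') w ∈ Icc (-𝒮) (0:ℝ))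
    {u : ℝ} (hu : u ∈ Icc (0:ℝ) R1) :
    AntitoneOn (fun w => S u w) (Icc (0:ℝ) R2) := by
  apply antitoneOn_of_deriv_nonpos (convex_Icc _ _)
  · exact (sliceW_diff hC u).continuous.continuousOn
  · exact (sliceW_diff hC u).differentiableOn
  · intro w hw
    exact (hd u hu w (interior_subset hw)).2

private lemma monoPhi {c 𝒮 R1 : ℝ} {f g : ℝ → ℝ} (hc : 0 ≤ c) (hc2 : c * (2 * 𝒮) ≤ 1)
    (hf : Differentiable ℝ f) (hg : Differentiable ℝ g)
    (hf' : ∀ u ∈ Icc (0:ℝ) R1, -𝒮 ≤ deriv f u) (hg' : ∀ u ∈ Icc (0:ℝ) R1, deriv g u ≤ 𝒮) :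
    MonotoneOn (fun u => u + c * (f u - g u)) (Icc (0:ℝ) R1) := by
  have hdiff : Differentiable ℝ (fun u => u + c * (f u - g u)) := by
    apply differentiable_id.add
    exact (hf.sub hg).const_mul c
  apply monotoneOn_of_deriv_nonneg (convex_Icc _ _)
  · exact hdiff.continuous.continuousOn
  · exact hdiff.differentiableOn
  · intro u hu
    have hu' : u ∈ Icc (0:ℝ) R1 := interior_subset hu
    have hD : HasDerivAt (fun u => u + c * (f u - g u))
        (1 + c * (deriv f u - deriv g u)) u := by
      exact (hasDerivAt_id u).add
        (((hf u).hasDerivAt.sub (hg u).hasDerivAt).const_mul c)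
    rw [hD.deriv]
    have h1 := hf' u hu'
    have h2 := hg' u hu'
    have : c * (-(2 * 𝒮)) ≤ c * (deriv f u - deriv g u) :=
      mul_le_mul_of_nonneg_left (by linarith) hc
    nlinarith

private lemma telescope (M : ℕ) (f : ℕ → ℝ) :
    ∑ j ∈ Finset.Icc 1 M, (f (j - 1) - f j) = f 0 - f M := by
  induction M with
  | zero => simp
  | succ n ih =>
    rw [Finset.sum_Icc_succ_top (by omega), ih]
    simp only [Nat.add_sub_cancel]
    ring

private lemma abs_min_eq (a b : ℝ) : a + b - 2 * min a b = |a - b| := by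
  rcases le_total a b with h | h
  · rw [min_eq_left h, abs_of_nonpos (by linarith)]; ring
  · rw [min_eq_right h, abs_of_nonneg (by linarith)]; ring

/-- L¹ stability estimate (FL2) in the proof of Lemma 3.2: the relaxation step
is an L¹-contraction between density profiles. -/
theorem relaxation_step_L1_contraction_profiles
(M : ℕ) (hM : 1 ≤ M)
    (R : ℕ → ℝ) (hR : ∀ j, 1 ≤ j → j ≤ M → 0 < R j)
    (𝒮 τ Δt : ℝ) (h𝒮 : 0 < 𝒮) (hτ : 0 < τ) (hΔt : 0 < Δt)
    (hΔtτ : Δt ≤ τ / (2 * 𝒮))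
    (S : ℕ → ℝ → ℝ → ℝ)
    (hS0 : ∀ u w, S 0 u w = 0)
    (hSM : ∀ u w, S M u w = 0)
    (hSC1 : ∀ j, 1 ≤ j → j ≤ M - 1 → ContDiff ℝ 1 (Function.uncurry (S j)))
    (hS1 : ∀ j, 1 ≤ j → j ≤ M - 1 → ∀ u ∈ Icc (0:ℝ) (R j), ∀ w ∈ Icc (0:ℝ) (R (j+1)),
      deriv (fun u' => S j u' w) u ∈ Icc (0:ℝ) 𝒮)
    (hS2 : ∀ j, 1 ≤ j → j ≤ M - 1 → ∀ u ∈ Icc (0:ℝ) (R j), ∀ w ∈ Icc (0:ℝ) (R (j+1)),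
      deriv (fun w' => S j u w') w ∈ Icc (-𝒮) (0:ℝ))
    (hS00 : ∀ j, 1 ≤ j → j ≤ M - 1 → S j 0 0 = 0)
    (hSRR : ∀ j, 1 ≤ j → j ≤ M - 1 → S j (R j) (R (j+1)) = 0)
    (g : (ℕ → ℝ) → ℕ → ℝ)
    (hg : ∀ ρ j, g ρ j = S (j-1) (ρ (j-1)) (ρ j) - S j (ρ j) (ρ (j+1)))
    (T : (ℕ → ℝ) → ℕ → ℝ)
    (hT : ∀ ρ j, T ρ j = ρ j + (Δt / τ) * g ρ j)
    (ρ σ : ℝ → ℕ → ℝ)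
    (hρbox : ∀ x, ∀ j, 1 ≤ j → j ≤ M → ρ x j ∈ Icc (0:ℝ) (R j))
    (hσbox : ∀ x, ∀ j, 1 ≤ j → j ≤ M → σ x j ∈ Icc (0:ℝ) (R j))
    (hρmeas : ∀ j, 1 ≤ j → j ≤ M → Measurable (fun x => ρ x j))
    (hσmeas : ∀ j, 1 ≤ j → j ≤ M → Measurable (fun x => σ x j))
    (hint : ∀ j, 1 ≤ j → j ≤ M → Integrable (fun x => ρ x j - σ x j)) :
    ∑ j ∈ Finset.Icc 1 M, ∫ x : ℝ, |T (ρ x) j - T (σ x) j|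
      ≤ ∑ j ∈ Finset.Icc 1 M, ∫ x : ℝ, |ρ x j - σ x j| := by
  have h2𝒮 : 0 < 2 * 𝒮 := by linarith
  have hc0 : 0 ≤ Δt / τ := le_of_lt (div_pos hΔt hτ)
  have hc2 : (Δt / τ) * (2 * 𝒮) ≤ 1 := by
    rw [div_mul_eq_mul_div, div_le_one hτ]
    calc Δt * (2 * 𝒮) ≤ (τ / (2 * 𝒮)) * (2 * 𝒮) :=
          mul_le_mul_of_nonneg_right hΔtτ (le_of_lt h2𝒮)
      _ = τ := div_mul_cancel₀ τ (ne_of_gt h2𝒮)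
  -- slice facts for u ↦ S (j-1) a u
  have sliceL : ∀ j, 1 ≤ j → j ≤ M → ∀ a : ℝ, (2 ≤ j → a ∈ Icc (0:ℝ) (R (j-1))) →
      Differentiable ℝ (fun u => S (j-1) a u) ∧
      ∀ u ∈ Icc (0:ℝ) (R j), deriv (fun u => S (j-1) a u) u ∈ Icc (-𝒮) (0:ℝ) := by
    intro j hj1 hj2 a ha
    rcases eq_or_lt_of_le hj1 with h1 | h1
    · have hz : (fun u => S (j-1) a u) = fun _ => (0:ℝ) := by
        funext u; rw [show j - 1 = 0 from by omega]; exact hS0 a u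
      rw [hz]
      refine ⟨differentiable_const 0, fun u hu => ?_⟩
      rw [deriv_const]
      exact ⟨by linarith, le_rfl⟩
    · have h2 : 2 ≤ j := h1
      have hk1 : 1 ≤ j - 1 := by omega
      have hk2 : j - 1 ≤ M - 1 := by omega
      refine ⟨sliceW_diff (hSC1 (j-1) hk1 hk2) a, fun u hu => ?_⟩
      have hu' : u ∈ Icc (0:ℝ) (R (j - 1 + 1)) := by
        rw [show j - 1 + 1 = j from by omega]; exact hu
      exact hS2 (j-1) hk1 hk2 a (ha h2) u hu'
  -- slice facts for u ↦ S j u b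
  have sliceR : ∀ j, 1 ≤ j → j ≤ M → ∀ b : ℝ, (j ≤ M - 1 → b ∈ Icc (0:ℝ) (R (j+1))) →
      Differentiable ℝ (fun u => S j u b) ∧
      ∀ u ∈ Icc (0:ℝ) (R j), deriv (fun u => S j u b) u ∈ Icc (0:ℝ) 𝒮 := by
    intro j hj1 hj2 b hb
    rcases eq_or_lt_of_le hj2 with h1 | h1
    · have hz : (fun u => S j u b) = fun _ => (0:ℝ) := by
        funext u; rw [h1]; exact hSM u b
      rw [hz]
      refine ⟨differentiable_const 0, fun u hu => ?_⟩
      rw [deriv_const]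
      exact ⟨le_rfl, le_of_lt h𝒮⟩
    · have hk2 : j ≤ M - 1 := by omega
      exact ⟨sliceU_diff (hSC1 j hj1 hk2) b, fun u hu => hS1 j hj1 hk2 u hu b (hb hk2)⟩
  -- monotonicity of the relaxation step
  have Tmono : ∀ p q : ℕ → ℝ, (∀ j, 1 ≤ j → j ≤ M → p j ∈ Icc (0:ℝ) (R j)) →
      (∀ j, 1 ≤ j → j ≤ M → q j ∈ Icc (0:ℝ) (R j)) → (∀ j, q j ≤ p j) →
      ∀ j, 1 ≤ j → j ≤ M → T q j ≤ T p j := by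
    intro p q hp hq hle j hj1 hj2
    have hA : S (j-1) (q (j-1)) (p j) ≤ S (j-1) (p (j-1)) (p j) := by
      rcases eq_or_lt_of_le hj1 with h1 | h1
      · rw [show j - 1 = 0 from by omega, hS0, hS0]
      · have h2 : 2 ≤ j := h1
        have hk1 : 1 ≤ j - 1 := by omega
        have hk2 : j - 1 ≤ M - 1 := by omega
        have hw : p j ∈ Icc (0:ℝ) (R (j - 1 + 1)) := by
          rw [show j - 1 + 1 = j from by omega]; exact hp j hj1 hj2
        exact monoS (hSC1 (j-1) hk1 hk2) (hS1 (j-1) hk1 hk2) hw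
          (hq (j-1) hk1 (by omega)) (hp (j-1) hk1 (by omega)) (hle (j-1))
    have hC : S j (q j) (p (j+1)) ≤ S j (q j) (q (j+1)) := by
      rcases eq_or_lt_of_le hj2 with h1 | h1
      · rw [h1, hSM, hSM]
      · have hk2 : j ≤ M - 1 := by omega
        exact antiS (hSC1 j hj1 hk2) (hS2 j hj1 hk2) (hq j hj1 hj2)
          (hq (j+1) (by omega) (by omega)) (hp (j+1) (by omega) (by omega)) (hle (j+1))
    have hB : q j + (Δt/τ) * (S (j-1) (q (j-1)) (q j) - S j (q j) (p (j+1)))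
        ≤ p j + (Δt/τ) * (S (j-1) (q (j-1)) (p j) - S j (p j) (p (j+1))) := by
      obtain ⟨hfd, hfd'⟩ := sliceL j hj1 hj2 (q (j-1))
        (fun h2 => hq (j-1) (by omega) (by omega))
      obtain ⟨hgd, hgd'⟩ := sliceR j hj1 hj2 (p (j+1))
        (fun hk => hp (j+1) (by omega) (by omega))
      have := monoPhi hc0 hc2 hfd hgd (fun u hu => (hfd' u hu).1) (fun u hu => (hgd' u hu).2)
        (hq j hj1 hj2) (hp j hj1 hj2) (hle j)
      simpa using this
    rw [hT, hT, hg, hg]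
    have h1 : 0 ≤ (Δt/τ) * (S (j-1) (p (j-1)) (p j) - S (j-1) (q (j-1)) (p j)) :=
      mul_nonneg hc0 (by linarith)
    have h3 : 0 ≤ (Δt/τ) * (S j (q j) (q (j+1)) - S j (q j) (p (j+1))) :=
      mul_nonneg hc0 (by linarith)
    nlinarith [hB]
  -- mass conservation
  have hmass : ∀ p : ℕ → ℝ, ∑ j ∈ Finset.Icc 1 M, T p j = ∑ j ∈ Finset.Icc 1 M, p j := by
    intro p
    have hcg : ∀ j ∈ Finset.Icc 1 M, T p j = p j + (Δt/τ) *
        ((fun k => S k (p k) (p (k+1))) (j-1) - (fun k => S k (p k) (p (k+1))) j) := by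
      intro j hj
      rw [Finset.mem_Icc] at hj
      rw [hT, hg]
      simp only []
      rw [show j - 1 + 1 = j from by omega]
    rw [Finset.sum_congr rfl hcg, Finset.sum_add_distrib, ← Finset.mul_sum,
      telescope M (fun k => S k (p k) (p (k+1)))]
    simp [hS0, hSM]
  -- componentwise minimum
  set m : ℝ → ℕ → ℝ := fun x k => min (ρ x k) (σ x k) with hmdef
  have hmbox : ∀ x, ∀ j, 1 ≤ j → j ≤ M → m x j ∈ Icc (0:ℝ) (R j) := fun x j h1 h2 =>
    ⟨le_min (hρbox x j h1 h2).1 (hσbox x j h1 h2).1,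
     le_trans (min_le_left _ _) (hρbox x j h1 h2).2⟩
  have hTρm : ∀ x, ∀ j, 1 ≤ j → j ≤ M → T (m x) j ≤ T (ρ x) j := fun x =>
    Tmono (ρ x) (m x) (hρbox x) (hmbox x) (fun k => min_le_left _ _)
  have hTσm : ∀ x, ∀ j, 1 ≤ j → j ≤ M → T (m x) j ≤ T (σ x) j := fun x =>
    Tmono (σ x) (m x) (hσbox x) (hmbox x) (fun k => min_le_right _ _)
  have hptA : ∀ x, ∀ j, 1 ≤ j → j ≤ M → |T (ρ x) j - T (σ x) j| ≤
      (T (ρ x) j - T (m x) j) + (T (σ x) j - T (m x) j) := by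
    intro x j h1 h2
    have a1 := hTρm x j h1 h2
    have a2 := hTσm x j h1 h2
    exact abs_le.mpr ⟨by linarith, by linarith⟩
  have hsum : ∀ x, ∑ j ∈ Finset.Icc 1 M,
      ((T (ρ x) j - T (m x) j) + (T (σ x) j - T (m x) j)) =
      ∑ j ∈ Finset.Icc 1 M, |ρ x j - σ x j| := by
    intro x
    have e1 : ∑ j ∈ Finset.Icc 1 M, ((T (ρ x) j - T (m x) j) + (T (σ x) j - T (m x) j))
        = (∑ j ∈ Finset.Icc 1 M, T (ρ x) j) + (∑ j ∈ Finset.Icc 1 M, T (σ x) j)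
          - 2 * ∑ j ∈ Finset.Icc 1 M, T (m x) j := by
      rw [Finset.sum_add_distrib, Finset.sum_sub_distrib, Finset.sum_sub_distrib]; ring
    rw [e1, hmass, hmass, hmass, Finset.mul_sum, ← Finset.sum_add_distrib,
      ← Finset.sum_sub_distrib]
    exact Finset.sum_congr rfl fun j hj => abs_min_eq _ _
  have hGint : Integrable (fun x => ∑ j ∈ Finset.Icc 1 M, |ρ x j - σ x j|) := by
    apply integrable_finset_sum
    intro j hj
    rw [Finset.mem_Icc] at hj
    exact (hint j hj.1 hj.2).abs
  have hbd : ∀ x, ∀ j, 1 ≤ j → j ≤ M → |T (ρ x) j - T (σ x) j| ≤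
      ∑ k ∈ Finset.Icc 1 M, |ρ x k - σ x k| := by
    intro x j h1 h2
    refine le_trans (hptA x j h1 h2) ?_
    rw [← hsum x]
    apply Finset.single_le_sum
      (f := fun j => (T (ρ x) j - T (m x) j) + (T (σ x) j - T (m x) j))
    · intro k hk
      rw [Finset.mem_Icc] at hk
      have b1 := hTρm x k hk.1 hk.2
      have b2 := hTσm x k hk.1 hk.2
      linarith
    · rw [Finset.mem_Icc]; exact ⟨h1, h2⟩
  -- measurability
  have measS : ∀ k, k ≤ M → ∀ f : ℝ → ℕ → ℝ,
      (∀ j, 1 ≤ j → j ≤ M → Measurable fun x => f x j) →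
      Measurable (fun x => S k (f x k) (f x (k+1))) := by
    intro k hk f hf
    rcases Nat.eq_zero_or_pos k with h0 | h0
    · have hz : (fun x => S k (f x k) (f x (k+1))) = fun _ => (0:ℝ) := by
        funext x; rw [h0]; exact hS0 _ _
      rw [hz]; exact measurable_const
    rcases eq_or_lt_of_le hk with hM' | hM'
    · have hz : (fun x => S k (f x k) (f x (k+1))) = fun _ => (0:ℝ) := by
        funext x; rw [hM']; exact hSM _ _
      rw [hz]; exact measurable_const
    · have hk2 : k ≤ M - 1 := by omega
      exact ((hSC1 k h0 hk2).continuous.measurable).comp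
        ((hf k h0 (by omega)).prodMk (hf (k+1) (by omega) (by omega)))
  have hTfun : ∀ (f : ℝ → ℕ → ℝ), ∀ j, 1 ≤ j → (fun x => T (f x) j) =
      fun x => f x j + (Δt/τ) *
        (S (j-1) (f x (j-1)) (f x (j-1+1)) - S j (f x j) (f x (j+1))) := by
    intro f j hj
    funext x
    rw [hT, hg, show j - 1 + 1 = j from by omega]
  have hTmeas : ∀ j, 1 ≤ j → j ≤ M → Measurable (fun x => T (ρ x) j - T (σ x) j) := by
    intro j h1 h2
    apply Measurable.sub
    · rw [hTfun ρ j h1]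
      exact (hρmeas j h1 h2).add
        (((measS (j-1) (by omega) ρ hρmeas).sub (measS j h2 ρ hρmeas)).const_mul _)
    · rw [hTfun σ j h1]
      exact (hσmeas j h1 h2).add
        (((measS (j-1) (by omega) σ hσmeas).sub (measS j h2 σ hσmeas)).const_mul _)
  have hTdint : ∀ j, 1 ≤ j → j ≤ M → Integrable (fun x => |T (ρ x) j - T (σ x) j|) := by
    intro j h1 h2
    apply Integrable.abs
    apply Integrable.mono' hGint ((hTmeas j h1 h2).aestronglyMeasurable)
    filter_upwards with x
    rw [Real.norm_eq_abs]
    exact hbd x j h1 h2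
  calc ∑ j ∈ Finset.Icc 1 M, ∫ x : ℝ, |T (ρ x) j - T (σ x) j|
      = ∫ x : ℝ, ∑ j ∈ Finset.Icc 1 M, |T (ρ x) j - T (σ x) j| :=
        (integral_finset_sum _ fun j hj => by
          rw [Finset.mem_Icc] at hj; exact hTdint j hj.1 hj.2).symm
    _ ≤ ∫ x : ℝ, ∑ j ∈ Finset.Icc 1 M, |ρ x j - σ x j| := by
        refine integral_mono (integrable_finset_sum _ fun j hj => by
          rw [Finset.mem_Icc] at hj; exact hTdint j hj.1 hj.2) hGint (fun x => ?_)
        refine le_trans (Finset.sum_le_sum fun j hj => ?_) (le_of_eq (hsum x))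
        rw [Finset.mem_Icc] at hj
        exact hptA x j hj.1 hj.2
    _ = ∑ j ∈ Finset.Icc 1 M, ∫ x : ℝ, |ρ x j - σ x j| :=
        integral_finset_sum _ fun j hj => by
          rw [Finset.mem_Icc] at hj; exact (hint j hj.1 hj.2).abs
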